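/- Let a>0, b>0, c≥0, g0>0 and let f0, f1 be the MTTP vector fields on ℝ⁴. Then for every x = (x1,x2,x3,x4) ∈ ℝ⁴, the iterated Lie bracket ad³f0.f1(x) = [f0,[f0,[f0,f1]]](x) equals (−a b((x4 − 2 c x1) cos x3 + c x2 sin x3), −a b sin x3 (x4 − 3 c x1), −a b c sin x3, 0). -/

import Mathlib

/-- The drift vector field of the MTTP system on ℝ⁴. -/
noncomputable def mttpF0 (a c g0 : ℝ) : (Fin 4 → ℝ) → (Fin 4 → ℝ) :=
  fun x => ![a * Real.cos (x 2) - c * x 0 * x 1,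
             a * Real.sin (x 2) + c * (x 0) ^ 2 - g0,
             x 3 - c * x 0,
             0]

/-- The control vector field of the MTTP system on ℝ⁴. -/
def mttpF1 (b : ℝ) : (Fin 4 → ℝ) → (Fin 4 → ℝ) :=
  fun _ => ![0, 0, 0, b]

/-- Lie bracket of vector fields on ℝ⁴: [f,g](x) = Dg(x)·f(x) − Df(x)·g(x). -/
noncomputable def lieBracket4 (f g : (Fin 4 → ℝ) → (Fin 4 → ℝ)) :
    (Fin 4 → ℝ) → (Fin 4 → ℝ) :=
  fun x => fderiv ℝ g x (f x) - fderiv ℝ f x (g x)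

noncomputable def pj (i : Fin 4) : (Fin 4 → ℝ) →L[ℝ] ℝ := ContinuousLinearMap.proj i

lemma hpj (i : Fin 4) (x : Fin 4 → ℝ) : HasFDerivAt (fun y : Fin 4 → ℝ => y i) (pj i) x := by
  exact (ContinuousLinearMap.proj i : (Fin 4 → ℝ) →L[ℝ] ℝ).hasFDerivAt

noncomputable def Df0 (a c : ℝ) (x : Fin 4 → ℝ) : (Fin 4 → ℝ) →L[ℝ] (Fin 4 → ℝ) :=
  ContinuousLinearMap.pi
    ![(-(a * Real.sin (x 2))) • pj 2 - (c * x 1) • pj 0 - (c * x 0) • pj 1,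
      (2 * c * x 0) • pj 0 + (a * Real.cos (x 2)) • pj 2,
      pj 3 - c • pj 0,
      0]

lemma hasF0 (a c g0 : ℝ) (x : Fin 4 → ℝ) :
    HasFDerivAt (mttpF0 a c g0) (Df0 a c x) x := by
  have : mttpF0 a c g0 = fun y i =>
      (![fun y : Fin 4 → ℝ => a * Real.cos (y 2) - c * y 0 * y 1,
        fun y => a * Real.sin (y 2) + c * (y 0) ^ 2 - g0,
        fun y => y 3 - c * y 0,
        fun _ => 0] : Fin 4 → (Fin 4 → ℝ) → ℝ) i y := by
    funext y i
    fin_cases i <;> simp [mttpF0]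
  rw [this, Df0, hasFDerivAt_pi]
  intro i
  fin_cases i <;> simp only [Matrix.cons_val_zero, Matrix.cons_val_one, Matrix.head_cons,
    Matrix.cons_val_two, Matrix.tail_cons, Matrix.cons_val_three]
  · have h1 : HasFDerivAt (fun y : Fin 4 → ℝ => a * Real.cos (y 2))
        (a • ((-Real.sin (x 2)) • pj 2)) x :=
      by have h := (((Real.hasDerivAt_cos (x 2)).comp_hasFDerivAt x (hpj 2 x))).const_mul a; exact h
    have h2 : HasFDerivAt (fun y : Fin 4 → ℝ => c * y 0 * y 1)
        ((c * x 0) • pj 1 + x 1 • (c • pj 0)) x :=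
      (((hpj 0 x).const_mul c).mul (hpj 1 x))
    exact (h1.sub h2).congr_fderiv (by ext v; simp; ring)
  · have h1 : HasFDerivAt (fun y : Fin 4 → ℝ => a * Real.sin (y 2))
        (a • ((Real.cos (x 2)) • pj 2)) x :=
      by have h := (((Real.hasDerivAt_sin (x 2)).comp_hasFDerivAt x (hpj 2 x))).const_mul a; exact h
    have h2 : HasFDerivAt (fun y : Fin 4 → ℝ => c * (y 0) ^ 2)
        (c • (x 0 • pj 0 + x 0 • pj 0)) x := by
      simp only [pow_two]
      exact ((hpj 0 x).mul (hpj 0 x)).const_mul c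
    exact ((h1.add h2).sub_const g0).congr_fderiv (by ext v; simp; ring)
  · exact ((hpj 3 x).sub ((hpj 0 x).const_mul c)).congr_fderiv (by ext v; simp)
  · exact (hasFDerivAt_const 0 x).congr_fderiv (by ext v; simp)

lemma Df0_apply (a c : ℝ) (x w : Fin 4 → ℝ) :
    Df0 a c x w = ![-(a * Real.sin (x 2)) * w 2 - c * x 1 * w 0 - c * x 0 * w 1,
      2 * c * x 0 * w 0 + a * Real.cos (x 2) * w 2,
      w 3 - c * w 0, 0] := by
  funext i
  fin_cases i <;> simp [Df0, pj] <;> ring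

lemma fderiv_f0 (a c g0 : ℝ) (x : Fin 4 → ℝ) :
    fderiv ℝ (mttpF0 a c g0) x = Df0 a c x := (hasF0 a c g0 x).fderiv

lemma b1 (a b c g0 : ℝ) :
    lieBracket4 (mttpF0 a c g0) (mttpF1 b) = fun _ => ![0, 0, -b, 0] := by
  funext x
  have : fderiv ℝ (mttpF1 b) x = 0 := fderiv_const_apply _
  simp only [lieBracket4, this, fderiv_f0, Df0_apply, ContinuousLinearMap.zero_apply]
  funext i
  fin_cases i <;> simp [mttpF1]

lemma b2 (a b c g0 : ℝ) :
    lieBracket4 (mttpF0 a c g0) (fun _ => ![0, 0, -b, 0]) =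
      fun x => ![-(a * b) * Real.sin (x 2), a * b * Real.cos (x 2), 0, 0] := by
  funext x
  have : fderiv ℝ (fun _ : Fin 4 → ℝ => ![0, 0, -b, 0]) x = 0 := fderiv_const_apply _
  simp only [lieBracket4, this, fderiv_f0, Df0_apply, ContinuousLinearMap.zero_apply]
  funext i
  fin_cases i <;> simp <;> ring

noncomputable def DG2 (a b : ℝ) (x : Fin 4 → ℝ) : (Fin 4 → ℝ) →L[ℝ] (Fin 4 → ℝ) :=
  ContinuousLinearMap.pi
    ![(-(a * b) * Real.cos (x 2)) • pj 2, (-(a * b) * Real.sin (x 2)) • pj 2, 0, 0]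

lemma hasG2 (a b : ℝ) (x : Fin 4 → ℝ) :
    HasFDerivAt (fun y : Fin 4 → ℝ =>
      ![-(a * b) * Real.sin (y 2), a * b * Real.cos (y 2), 0, 0]) (DG2 a b x) x := by
  have : (fun y : Fin 4 → ℝ => ![-(a * b) * Real.sin (y 2), a * b * Real.cos (y 2), 0, 0])
      = fun y i => (![fun y : Fin 4 → ℝ => -(a * b) * Real.sin (y 2),
        fun y => a * b * Real.cos (y 2), fun _ => 0, fun _ => 0]
        : Fin 4 → (Fin 4 → ℝ) → ℝ) i y := by
    funext y i; fin_cases i <;> simp [Matrix.vecHead, Matrix.vecTail]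
  rw [this, DG2, hasFDerivAt_pi]
  intro i
  fin_cases i <;> simp only [Matrix.cons_val_zero, Matrix.cons_val_one, Matrix.head_cons,
    Matrix.cons_val_two, Matrix.tail_cons, Matrix.cons_val_three]
  · exact (((Real.hasDerivAt_sin (x 2)).comp_hasFDerivAt x (hpj 2 x)).const_mul
      (-(a * b))).congr_fderiv (by ext v; simp; ring)
  · exact (((Real.hasDerivAt_cos (x 2)).comp_hasFDerivAt x (hpj 2 x)).const_mul
      (a * b)).congr_fderiv (by ext v; simp; ring)
  · exact (hasFDerivAt_const 0 x).congr_fderiv (by ext v; simp)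
  · exact (hasFDerivAt_const 0 x).congr_fderiv (by ext v; simp)

theorem stmt3 (a b c g0 : ℝ) (ha : 0 < a) (hb : 0 < b) (hc : 0 ≤ c) (hg0 : 0 < g0)
    (x : Fin 4 → ℝ) :
    lieBracket4 (mttpF0 a c g0)
        (lieBracket4 (mttpF0 a c g0) (lieBracket4 (mttpF0 a c g0) (mttpF1 b))) x =
      ![-(a * b) * ((x 3 - 2 * c * x 0) * Real.cos (x 2) + c * x 1 * Real.sin (x 2)),
        -(a * b) * Real.sin (x 2) * (x 3 - 3 * c * x 0),
        -(a * b * c) * Real.sin (x 2),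
        0] := by
  rw [b1, b2]
  simp only [lieBracket4, fderiv_f0, (hasG2 a b x).fderiv, Df0_apply]
  funext i
  fin_cases i <;>
    simp [DG2, pj, ContinuousLinearMap.pi_apply, mttpF0] <;> ring
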